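/- In a unital Banach algebra, if a ∈ A satisfies ‖a² − a‖ < 1/4, then the element s := Σ_{n≥0} C(2n,n)(a − a²)ⁿ satisfies s² = (1 − 4a + 4a²)⁻¹, and consequently p := (a − 1/2)s + 1/2 satisfies (2p − 1)² = 1, i.e. p is an idempotent. -/

import Mathlib

open Finset

private lemma my_centralBinom_le_four_pow (n : ℕ) : Nat.centralBinom n ≤ 4 ^ n := by
  have h : Nat.centralBinom n ≤ ∑ m ∈ range (2 * n + 1), (2 * n).choose m := by
    rw [Nat.centralBinom_eq_two_mul_choose]
    exact Finset.single_le_sum (f := fun m => (2 * n).choose m) (fun _ _ => Nat.zero_le _)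
      (Finset.mem_range.mpr (by omega))
  calc Nat.centralBinom n ≤ 2 ^ (2 * n) := by rwa [Nat.sum_range_choose] at h
    _ = 4 ^ n := by rw [pow_mul]; norm_num

private lemma my_weighted_symm (m : ℕ) :
    2 * ∑ i ∈ range (m + 1), (i : ℚ) * Nat.centralBinom i * Nat.centralBinom (m - i)
      = m * ∑ i ∈ range (m + 1), (Nat.centralBinom i : ℚ) * Nat.centralBinom (m - i) := by
  rw [two_mul]
  nth_rewrite 2 [← Finset.sum_range_reflect]
  rw [Finset.mul_sum, ← Finset.sum_add_distrib]
  refine Finset.sum_congr rfl fun i hi => ?_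
  simp only [Finset.mem_range] at hi
  have h1 : i ≤ m := Nat.lt_succ_iff.mp hi
  have h2 : m + 1 - 1 - i = m - i := by omega
  have h3 : m - (m - i) = i := by omega
  rw [h2, h3]
  have h4 : ((m - i : ℕ) : ℚ) = (m : ℚ) - i := by
    rw [Nat.cast_sub h1]
  rw [h4]
  ring

private lemma my_conv_q (n : ℕ) :
    ∑ i ∈ range (n + 1), (Nat.centralBinom i : ℚ) * Nat.centralBinom (n - i) = 4 ^ n := by
  induction n with
  | zero => simp [Nat.centralBinom_zero]
  | succ n ih =>
    have hT : ∑ j ∈ range (n + 2), (j : ℚ) * Nat.centralBinom j * Nat.centralBinom (n + 1 - j)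
        = 4 * ∑ i ∈ range (n + 1), (i : ℚ) * Nat.centralBinom i * Nat.centralBinom (n - i)
          + 2 * ∑ i ∈ range (n + 1),
              (Nat.centralBinom i : ℚ) * Nat.centralBinom (n - i) := by
      rw [Finset.sum_range_succ']
      simp only [Nat.cast_zero, zero_mul]
      rw [add_zero, Finset.mul_sum, Finset.mul_sum, ← Finset.sum_add_distrib]
      refine Finset.sum_congr rfl fun i hi => ?_
      simp only [Finset.mem_range] at hi
      have h1 : n + 1 - (i + 1) = n - i := by omega
      have hq : ((i + 1 : ℕ) : ℚ) * (Nat.centralBinom (i + 1) : ℚ)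
          = 2 * (2 * i + 1) * Nat.centralBinom i := by
        have := Nat.succ_mul_centralBinom_succ i
        exact_mod_cast congrArg (fun x : ℕ => (x : ℚ)) this
      rw [h1]
      push_cast
      push_cast at hq
      nlinarith [hq, sq_nonneg ((Nat.centralBinom (n - i) : ℚ))]
    have hA1 := my_weighted_symm (n + 1)
    have hA0 := my_weighted_symm n
    have hn1 : ((n : ℚ) + 1) ≠ 0 := by positivity
    have key : ((n : ℚ) + 1) * ∑ i ∈ range (n + 2),
          (Nat.centralBinom i : ℚ) * Nat.centralBinom (n + 1 - i)
        = ((n : ℚ) + 1) * (4 * 4 ^ n) := by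
      push_cast at hA1 hA0 ⊢
      nlinarith [hA1, hA0, hT, ih]
    have := mul_left_cancel₀ hn1 key
    rw [show n + 1 + 1 = n + 2 from rfl, this]
    ring

private lemma my_conv_nat (n : ℕ) :
    ∑ i ∈ range (n + 1), Nat.centralBinom i * Nat.centralBinom (n - i) = 4 ^ n := by
  have h := my_conv_q n
  have : ((∑ i ∈ range (n + 1), Nat.centralBinom i * Nat.centralBinom (n - i) : ℕ) : ℚ)
      = ((4 ^ n : ℕ) : ℚ) := by push_cast; rw [← h]
  exact_mod_cast this

/-- If `‖a² − a‖ < 1/4`, then `s = Σ C(2n,n)(a − a²)ⁿ` satisfies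
`s² = (1 − 4a + 4a²)⁻¹`, and `p = (a − 1/2)s + 1/2` satisfies `(2p − 1)² = 1`,
i.e. `p` is an idempotent. -/
theorem centralBinom_series_idempotent {A : Type*} [NormedRing A] [NormOneClass A]
    [CompleteSpace A] [NormedAlgebra ℂ A]
    (a : A) (hν : ‖a * a - a‖ < 1 / 4)
    (s p : A)
    (hs : s = ∑' n : ℕ, (Nat.centralBinom n : A) * (a - a * a) ^ n)
    (hp : p = (a - (1 / 2 : ℂ) • (1 : A)) * s + (1 / 2 : ℂ) • (1 : A)) :
    IsUnit (1 - 4 * a + 4 * (a * a)) ∧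
    s * s = Ring.inverse (1 - 4 * a + 4 * (a * a)) ∧
    (2 * p - 1) * (2 * p - 1) = 1 ∧
    p * p = p := by
  set b : A := a - a * a with hb_def
  have hb : ‖b‖ < 1 / 4 := by
    have h : b = -(a * a - a) := by rw [hb_def, neg_sub]
    rw [h, norm_neg]; exact hν
  have hb0 : (0 : ℝ) ≤ ‖b‖ := norm_nonneg b
  have h4b : 4 * ‖b‖ < 1 := by linarith
  -- the term function and its summability
  set f : ℕ → A := fun n => (Nat.centralBinom n : A) * b ^ n with hf_def
  have hbound : ∀ n, ‖f n‖ ≤ (4 * ‖b‖) ^ n := by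
    intro n
    calc ‖f n‖ ≤ ‖(Nat.centralBinom n : A)‖ * ‖b ^ n‖ := norm_mul_le _ _
      _ ≤ (Nat.centralBinom n : ℝ) * ‖b‖ ^ n := by
          refine mul_le_mul ?_ (norm_pow_le b n) (norm_nonneg _) (Nat.cast_nonneg _)
          calc ‖((Nat.centralBinom n : ℕ) : A)‖ ≤ (Nat.centralBinom n : ℝ) * ‖(1 : A)‖ :=
                Nat.norm_cast_le _
            _ = (Nat.centralBinom n : ℝ) := by rw [norm_one, mul_one]
      _ ≤ (4 ^ n : ℝ) * ‖b‖ ^ n := by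
          refine mul_le_mul_of_nonneg_right ?_ (pow_nonneg hb0 n)
          exact_mod_cast my_centralBinom_le_four_pow n
      _ = (4 * ‖b‖) ^ n := by rw [mul_pow]
  have hgeo : Summable fun n : ℕ => (4 * ‖b‖) ^ n :=
    summable_geometric_of_lt_one (by positivity) h4b
  have hsum : Summable fun n => ‖f n‖ :=
    Summable.of_nonneg_of_le (fun n => norm_nonneg _) hbound hgeo
  have hsumf : Summable f := hsum.of_norm
  -- the element x = 4 b
  have hcomm4b : Commute (4 : A) b := by
    have := (Nat.cast_commute (4 : ℕ) b)
    simpa using this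
  have hx : ‖(4 : A) * b‖ < 1 := by
    calc ‖(4 : A) * b‖ ≤ ‖(4 : A)‖ * ‖b‖ := norm_mul_le _ _
      _ ≤ 4 * ‖b‖ := by
          gcongr
          have : ‖((4 : ℕ) : A)‖ ≤ (4 : ℝ) * ‖(1 : A)‖ := by exact_mod_cast Nat.norm_cast_le 4
          simpa [norm_one] using this
      _ < 1 := h4b
  have h1x : (1 : A) - 4 * b = 1 - 4 * a + 4 * (a * a) := by
    rw [hb_def]; noncomm_ring
  -- first conjunct
  have hunit : IsUnit (1 - 4 * a + 4 * (a * a)) := by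
    rw [← h1x]; exact isUnit_one_sub_of_norm_lt_one hx
  -- Cauchy product
  have hss : s * s = Ring.inverse (1 - 4 * a + 4 * (a * a)) := by
    rw [hs]
    rw [tsum_mul_tsum_eq_tsum_sum_antidiagonal_of_summable_norm hsum hsum]
    have hterm : ∀ n : ℕ, (∑ kl ∈ Finset.HasAntidiagonal.antidiagonal n,
        ((Nat.centralBinom kl.1 : A) * b ^ kl.1) * ((Nat.centralBinom kl.2 : A) * b ^ kl.2))
        = ((4 : A) * b) ^ n := by
      intro n
      rw [Finset.Nat.sum_antidiagonal_eq_sum_range_succ_mk]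
      have hstep : ∀ i ∈ range (n + 1),
          ((Nat.centralBinom i : A) * b ^ i) * ((Nat.centralBinom (n - i) : A) * b ^ (n - i))
          = ((Nat.centralBinom i * Nat.centralBinom (n - i) : ℕ) : A) * b ^ n := by
        intro i hi
        have hi' : i ≤ n := Nat.lt_succ_iff.mp (Finset.mem_range.mp hi)
        have hc : Commute (b ^ i) ((Nat.centralBinom (n - i) : A)) :=
          (Nat.cast_commute _ _).symm
        rw [Nat.cast_mul]
        calc ((Nat.centralBinom i : A) * b ^ i) * ((Nat.centralBinom (n - i) : A) * b ^ (n - i))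
            = (Nat.centralBinom i : A) * (b ^ i * (Nat.centralBinom (n - i) : A)) * b ^ (n - i) := by
              rw [mul_assoc, mul_assoc, mul_assoc]
          _ = (Nat.centralBinom i : A) * ((Nat.centralBinom (n - i) : A) * b ^ i) * b ^ (n - i) := by
              rw [hc.eq]
          _ = (Nat.centralBinom i : A) * (Nat.centralBinom (n - i) : A) * (b ^ i * b ^ (n - i)) := by
              noncomm_ring
          _ = (Nat.centralBinom i : A) * (Nat.centralBinom (n - i) : A) * b ^ n := by
              rw [← pow_add, Nat.add_sub_cancel' hi']
      rw [Finset.sum_congr rfl hstep, ← Finset.sum_mul, ← Nat.cast_sum, my_conv_nat n,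
        hcomm4b.mul_pow]
      push_cast
      ring
    rw [tsum_congr hterm, geom_series_eq_inverse _ hx, h1x]
  -- s commutes with (2 a - 1)
  have hcommsa : (2 * a - 1) * s = s * (2 * a - 1) := by
    rw [hs, ← hsumf.tsum_mul_left, ← hsumf.tsum_mul_right]
    refine tsum_congr fun n => ?_
    have hba : Commute b a := by
      rw [hb_def]
      exact ((Commute.refl a).sub_left ((Commute.refl a).mul_left (Commute.refl a)))
    have h1 : Commute ((Nat.centralBinom n : A) * b ^ n) (2 * a - 1) := by
      have hcast : Commute ((Nat.centralBinom n : A)) (2 * a - 1) := Nat.cast_commute _ _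
      have hpow : Commute (b ^ n) (2 * a - 1) := by
        have h2 : Commute b (2 * a - 1) :=
          ((Commute.ofNat_right b 2).mul_right hba).sub_right (Commute.one_right b)
        exact h2.pow_left n
      exact hcast.mul_left hpow
    exact h1.symm.eq
  -- 2p - 1 = (2a - 1) s
  set e : A := (1 / 2 : ℂ) • (1 : A) with he_def
  have h2e : (2 : A) * e = 1 := by
    have h1 : e = algebraMap ℂ A (1 / 2) := by
      rw [he_def, Algebra.algebraMap_eq_smul_one]
    have h2 : (2 : A) = algebraMap ℂ A 2 := by
      rw [map_ofNat]
    rw [h1, h2, ← map_mul]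
    norm_num
  have h2p : 2 * p - 1 = (2 * a - 1) * s := by
    rw [hp]
    have expand : 2 * ((a - e) * s + e) - 1 = (2 * a - 2 * e) * s + (2 * e - 1) := by
      noncomm_ring
    rw [expand, h2e]
    noncomm_ring
  -- (2p-1)^2 = 1
  have hsq : (2 * p - 1) * (2 * p - 1) = 1 := by
    rw [h2p]
    calc (2 * a - 1) * s * ((2 * a - 1) * s)
        = (2 * a - 1) * (s * (2 * a - 1)) * s := by noncomm_ring
      _ = (2 * a - 1) * ((2 * a - 1) * s) * s := by rw [← hcommsa]
      _ = ((2 * a - 1) * (2 * a - 1)) * (s * s) := by noncomm_ring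
      _ = (1 - 4 * a + 4 * (a * a)) * Ring.inverse (1 - 4 * a + 4 * (a * a)) := by
          rw [hss]; congr 1; noncomm_ring
      _ = 1 := Ring.mul_inverse_cancel _ hunit
  -- idempotency
  have hpp : p * p = p := by
    have expand : (2 * p - 1) * (2 * p - 1) = 4 * (p * p) - 4 * p + 1 := by noncomm_ring
    have h1 : 4 * (p * p) - 4 * p + 1 = (1 : A) := by rw [← expand]; exact hsq
    have h2 : 4 * (p * p) - 4 * p = 0 := by
      have := congrArg (fun x : A => x - 1) h1
      simpa using this
    have h0 : (4 : A) * (p * p) = (4 : A) * p := sub_eq_zero.mp h2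
    have h4 : (4 : A) = (4 : ℂ) • (1 : A) := by
      rw [← Algebra.algebraMap_eq_smul_one, map_ofNat]
    rw [h4, smul_mul_assoc, smul_mul_assoc, one_mul, one_mul] at h0
    have h5 := congrArg (fun x : A => (4 : ℂ)⁻¹ • x) h0
    simpa [smul_smul, inv_mul_cancel₀ (by norm_num : (4 : ℂ) ≠ 0)] using h5
  exact ⟨hunit, hss, hsq, hpp⟩
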